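/- Let $n \ge 1$, and for each $i \in \{1,\dots,n\}$ and $j \ge 0$ let $g_{i,j} \in \mathbb{R}$, $\varsigma > 0$, $\vartheta \in (0,1]$, $\mu \in (0, 1/2)$, and $\Delta_{i,j} = |g_{i,j}| / w_{i,j}$ where $w_{i,j} \ge \sqrt{\vartheta}\,(\varsigma + \sum_{\ell=0}^j g_{i,\ell}^2)^{\mu}$. Then $\sum_{i=1}^n \sum_{j=0}^k \Delta_{i,j}^2 \le \frac{n}{\vartheta(1-2\mu)} \Big(\varsigma + \sum_{\ell=0}^k \|g_\ell\|^2\Big)^{1-2\mu}$, where $\|g_\ell\|^2 = \sum_{i=1}^n g_{i,\ell}^2$. -/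

import Mathlib

open Finset

lemma aux_step {y a α : ℝ} (hy : 0 < y) (ha : 0 ≤ a) (hα0 : 0 ≤ α) (hα1 : α < 1) :
    a / (y + a) ^ α ≤ ((y + a) ^ (1 - α) - y ^ (1 - α)) / (1 - α) := by
  have hx : 0 < y + a := by linarith
  set x := y + a with hxdef
  set β := 1 - α with hβdef
  have hβ0 : 0 < β := by rw [hβdef]; linarith
  have hβ1 : β ≤ 1 := by rw [hβdef]; linarith
  have hxne : x ≠ 0 := hx.ne'
  have hs : -1 ≤ y / x - 1 := by
    have : 0 ≤ y / x := by positivity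
    linarith
  have hb := rpow_one_add_le_one_add_mul_self hs hβ0.le hβ1
  rw [show (1 : ℝ) + (y / x - 1) = y / x by ring] at hb
  have h1 : x ^ β * (y / x) ^ β = y ^ β := by
    rw [← Real.mul_rpow hx.le (by positivity), mul_div_cancel₀ _ hxne]
  have h2 : x ^ β / x = x ^ (β - 1) := by
    rw [Real.rpow_sub hx β 1, Real.rpow_one]
  have hyβ : y ^ β ≤ x ^ β - β * (a * x ^ (β - 1)) := by
    have hmul := mul_le_mul_of_nonneg_left hb (Real.rpow_pos_of_pos hx β).le
    rw [h1] at hmul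
    have e1 : x ^ β * (1 + β * (y / x - 1)) = x ^ β - β * (a * (x ^ β / x)) := by
      field_simp
      ring
    rw [e1, h2] at hmul
    exact hmul
  have e3 : a / x ^ α = a * x ^ (β - 1) := by
    rw [show β - 1 = -α by rw [hβdef]; ring, Real.rpow_neg hx.le, div_eq_mul_inv]
  rw [e3, le_div_iff₀ hβ0]
  calc a * x ^ (β - 1) * β = β * (a * x ^ (β - 1)) := by ring
    _ ≤ x ^ β - y ^ β := by linarith

lemma aux_sum (ς α : ℝ) (hς : 0 < ς) (hα0 : 0 ≤ α) (hα1 : α < 1) (a : ℕ → ℝ)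
    (ha : ∀ j, 0 ≤ a j) (k : ℕ) :
    ∑ j ∈ Finset.range (k + 1), a j / (ς + ∑ ℓ ∈ Finset.range (j + 1), a ℓ) ^ α ≤
      ((ς + ∑ ℓ ∈ Finset.range (k + 1), a ℓ) ^ (1 - α) - ς ^ (1 - α)) / (1 - α) := by
  induction k with
  | zero =>
      simpa using aux_step (a := a 0) hς (ha 0) hα0 hα1
  | succ k ih =>
      rw [Finset.sum_range_succ]
      have hS : 0 < ς + ∑ ℓ ∈ Finset.range (k + 1), a ℓ := by
        have : 0 ≤ ∑ ℓ ∈ Finset.range (k + 1), a ℓ := Finset.sum_nonneg fun j _ => ha j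
        linarith
      have hstep := aux_step (y := ς + ∑ ℓ ∈ Finset.range (k + 1), a ℓ)
        (a := a (k + 1)) hS (ha (k + 1)) hα0 hα1
      have heq : ς + ∑ ℓ ∈ Finset.range (k + 1 + 1), a ℓ =
          (ς + ∑ ℓ ∈ Finset.range (k + 1), a ℓ) + a (k + 1) := by
        rw [Finset.sum_range_succ]; ring
      rw [heq]
      calc _ ≤ ((ς + ∑ ℓ ∈ Finset.range (k + 1), a ℓ) ^ (1 - α) - ς ^ (1 - α)) / (1 - α)
            + a (k + 1) / ((ς + ∑ ℓ ∈ Finset.range (k + 1), a ℓ) + a (k + 1)) ^ α :=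
              add_le_add ih (le_refl _)
        _ ≤ ((ς + ∑ ℓ ∈ Finset.range (k + 1), a ℓ) ^ (1 - α) - ς ^ (1 - α)) / (1 - α)
            + (((ς + ∑ ℓ ∈ Finset.range (k + 1), a ℓ) + a (k + 1)) ^ (1 - α)
              - (ς + ∑ ℓ ∈ Finset.range (k + 1), a ℓ) ^ (1 - α)) / (1 - α) :=
              add_le_add (le_refl _) hstep
        _ = _ := by rw [← add_div]; ring_nf

theorem stmt_13 (n : ℕ) (hn : 1 ≤ n) (g w Δ : Fin n → ℕ → ℝ)
    (ς ϑ μ : ℝ) (hς : 0 < ς) (hϑ0 : 0 < ϑ) (hϑ1 : ϑ ≤ 1) (hμ0 : 0 < μ) (hμ1 : μ < 1 / 2)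
    (hw : ∀ i j, Real.sqrt ϑ * (ς + ∑ ℓ ∈ Finset.range (j + 1), (g i ℓ) ^ 2) ^ μ ≤ w i j)
    (hΔ : ∀ i j, Δ i j = |g i j| / w i j) (k : ℕ) :
    ∑ i : Fin n, ∑ j ∈ Finset.range (k + 1), (Δ i j) ^ 2 ≤
      (n : ℝ) / (ϑ * (1 - 2 * μ)) *
        (ς + ∑ ℓ ∈ Finset.range (k + 1), ∑ i : Fin n, (g i ℓ) ^ 2) ^ (1 - 2 * μ) := by
  have h2μ : 2 * μ < 1 := by linarith
  have h1m : 0 < 1 - 2 * μ := by linarith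
  set S : ℝ := ς + ∑ ℓ ∈ Finset.range (k + 1), ∑ i : Fin n, (g i ℓ) ^ 2 with hSdef
  have hSpos : 0 < S := by
    have : (0:ℝ) ≤ ∑ ℓ ∈ Finset.range (k + 1), ∑ i : Fin n, (g i ℓ) ^ 2 :=
      Finset.sum_nonneg fun ℓ _ => Finset.sum_nonneg fun i _ => sq_nonneg _
    rw [hSdef]; linarith
  have key : ∀ i : Fin n, ∑ j ∈ Finset.range (k + 1), (Δ i j) ^ 2 ≤
      1 / (ϑ * (1 - 2 * μ)) * S ^ (1 - 2 * μ) := by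
    intro i
    set s : ℕ → ℝ := fun j => ς + ∑ ℓ ∈ Finset.range (j + 1), (g i ℓ) ^ 2 with hsdef
    have hspos : ∀ j, 0 < s j := by
      intro j
      have : (0:ℝ) ≤ ∑ ℓ ∈ Finset.range (j + 1), (g i ℓ) ^ 2 :=
        Finset.sum_nonneg fun ℓ _ => sq_nonneg _
      simp only [hsdef]; linarith
    have hΔle : ∀ j, (Δ i j) ^ 2 ≤ (g i j) ^ 2 / (s j) ^ (2 * μ) / ϑ := by
      intro j
      have hwpos : 0 < w i j :=
        lt_of_lt_of_le (by positivity) (hw i j)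
      have hp : ((s j) ^ μ) ^ 2 = (s j) ^ (2 * μ) := by
        rw [← Real.rpow_natCast ((s j) ^ μ) 2, ← Real.rpow_mul (hspos j).le]
        norm_num [mul_comm]
      have hwsq : ϑ * (s j) ^ (2 * μ) ≤ (w i j) ^ 2 := by
        calc ϑ * (s j) ^ (2 * μ) = (Real.sqrt ϑ * (s j) ^ μ) ^ 2 := by
              rw [mul_pow, Real.sq_sqrt hϑ0.le, hp]
          _ ≤ (w i j) ^ 2 := by
              apply pow_le_pow_left₀ (by positivity) (hw i j)
      have hΔsq : (Δ i j) ^ 2 = (g i j) ^ 2 / (w i j) ^ 2 := by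
        rw [hΔ i j, div_pow, sq_abs]
      rw [hΔsq, div_div]
      apply div_le_div_of_nonneg_left (sq_nonneg _) (by positivity)
      rwa [mul_comm] at hwsq
    have hsk : s k ≤ S := by
      have h2 : ∑ ℓ ∈ Finset.range (k + 1), (g i ℓ) ^ 2 ≤
          ∑ ℓ ∈ Finset.range (k + 1), ∑ i' : Fin n, (g i' ℓ) ^ 2 :=
        Finset.sum_le_sum fun ℓ _ =>
          Finset.single_le_sum (f := fun i' => (g i' ℓ) ^ 2)
            (fun i' _ => sq_nonneg _) (Finset.mem_univ i)
      simp only [hsdef, hSdef]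
      linarith
    calc ∑ j ∈ Finset.range (k + 1), (Δ i j) ^ 2
        ≤ ∑ j ∈ Finset.range (k + 1), (g i j) ^ 2 / (s j) ^ (2 * μ) / ϑ :=
          Finset.sum_le_sum fun j _ => hΔle j
      _ = (∑ j ∈ Finset.range (k + 1), (g i j) ^ 2 / (s j) ^ (2 * μ)) / ϑ := by
          rw [Finset.sum_div]
      _ ≤ ((s k) ^ (1 - 2 * μ) - ς ^ (1 - 2 * μ)) / (1 - 2 * μ) / ϑ := by
          apply div_le_div_of_nonneg_right _ hϑ0.le
          exact aux_sum ς (2 * μ) hς (by linarith) h2μ (fun j => (g i j) ^ 2)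
            (fun j => sq_nonneg _) k
      _ ≤ S ^ (1 - 2 * μ) / (1 - 2 * μ) / ϑ := by
          apply div_le_div_of_nonneg_right _ hϑ0.le
          apply div_le_div_of_nonneg_right _ h1m.le
          have hςp : (0:ℝ) ≤ ς ^ (1 - 2 * μ) := (Real.rpow_pos_of_pos hς _).le
          have := Real.rpow_le_rpow (hspos k).le hsk h1m.le
          linarith
      _ = 1 / (ϑ * (1 - 2 * μ)) * S ^ (1 - 2 * μ) := by
          rw [div_div, one_div, inv_mul_eq_div, mul_comm ϑ (1 - 2 * μ)]
  calc ∑ i : Fin n, ∑ j ∈ Finset.range (k + 1), (Δ i j) ^ 2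
      ≤ ∑ _i : Fin n, 1 / (ϑ * (1 - 2 * μ)) * S ^ (1 - 2 * μ) :=
        Finset.sum_le_sum fun i _ => key i
    _ = (n : ℝ) / (ϑ * (1 - 2 * μ)) * S ^ (1 - 2 * μ) := by
        rw [Finset.sum_const, Finset.card_univ, Fintype.card_fin, nsmul_eq_mul]
        ring
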